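/- For every n ≥ 1, the linear maps odd_n : ℚF_n → ℚO_n and even_n : ℚF_n → ℚE_n are both surjective. -/

import Mathlib

/-! Common definitions: free ℚ-vector spaces on finite sets of subsets/partitions of
`[n] = {1,…,n}`, the pairing ⟨Π,T⟩, the maps φ̃, α, β, π̃*, π̃_*, odd, even, γ,
and the relation subspace `R_{d,n}`. -/

/-- `B` is a set partition of `[n] = {1,…,n}`: the parts are nonempty, pairwise
disjoint, and their union is `{1,…,n}`. -/
def IsPartition (n : ℕ) (B : Finset (Finset ℕ)) : Prop :=
  (∀ P ∈ B, P.Nonempty) ∧ (∀ P ∈ B, ∀ Q ∈ B, P ≠ Q → P ∩ Q = ∅) ∧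
    B.sup id = Finset.Icc 1 n

instance (n : ℕ) (B : Finset (Finset ℕ)) : Decidable (IsPartition n B) := by
  unfold IsPartition; infer_instance

/-- `SP_{d,n}`: the set of set partitions of `[n]` into exactly `d+3` nonempty parts. -/
def SPf (d : ℤ) (n : ℕ) : Finset (Finset (Finset ℕ)) :=
  ((Finset.Icc 1 n).powerset.powerset).filter
    (fun B => IsPartition n B ∧ (B.card : ℤ) = d + 3)

/-- `K^d_n = {T ⊆ [n] : |T| ≥ d+3, |T| ≡ d+3 (mod 2)}`. -/
def Kf (d : ℤ) (n : ℕ) : Finset (Finset ℕ) :=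
  (Finset.Icc 1 n).powerset.filter
    (fun T => d + 3 ≤ (T.card : ℤ) ∧ (T.card : ℤ) % 2 = (d + 3) % 2)

/-- The basis vector of the free vector space `ℚS = (↥S → ℚ)` corresponding to `a`
(the zero vector if `a ∉ S`). -/
def bvec {A : Type*} [DecidableEq A] (S : Finset A) (a : A) : ↥S → ℚ :=
  fun x => if x.val = a then 1 else 0

/-- The pairing `⟨B,T⟩`: `1` if `T` meets every part of `B`, else `0`. -/
def pairPT (B : Finset (Finset ℕ)) (T : Finset ℕ) : ℚ :=
  if ∀ P ∈ B, (P ∩ T).Nonempty then 1 else 0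

/-- The linear map `φ̃_{d,n} : ℚSP_{d,n} → ℚK^d_n`, `Π ↦ Σ_{T ∈ K^d_n} ⟨Π,T⟩·T`. -/
noncomputable def phiT (d : ℤ) (n : ℕ) : (↥(SPf d n) → ℚ) →ₗ[ℚ] (↥(Kf d n) → ℚ) :=
  Matrix.mulVecLin (Matrix.of fun T B => pairPT B.val T.val)

/-- Generic "insert `n+1`" map between free vector spaces on finite families of
subsets of `ℕ`: sends the basis vector of `T` to the basis vector of `T ∪ {n+1}`. -/
noncomputable def insMap (n : ℕ) (S S' : Finset (Finset ℕ)) :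
    (↥S → ℚ) →ₗ[ℚ] (↥S' → ℚ) :=
  Matrix.mulVecLin (Matrix.of fun T' T =>
    if T'.val = insert (n+1) T.val then (1 : ℚ) else 0)

/-- Generic "forget `n+1`" map: sends the basis vector of `T` to itself if
`n+1 ∉ T` and to `0` otherwise. -/
noncomputable def resMap (n : ℕ) (S S' : Finset (Finset ℕ)) :
    (↥S → ℚ) →ₗ[ℚ] (↥S' → ℚ) :=
  Matrix.mulVecLin (Matrix.of fun T' T =>
    if T.val = T'.val ∧ n+1 ∉ T.val then (1 : ℚ) else 0)

/-- `α : ℚK^d_n → ℚK^{d+1}_{n+1}`, `T ↦ T ∪ {n+1}`. -/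
noncomputable def alphaK (d : ℤ) (n : ℕ) : (↥(Kf d n) → ℚ) →ₗ[ℚ] (↥(Kf (d+1) (n+1)) → ℚ) :=
  insMap n (Kf d n) (Kf (d+1) (n+1))

/-- `β : ℚK^d_{n+1} → ℚK^d_n`, `T ↦ T` if `n+1 ∉ T`, else `T ↦ 0`. -/
noncomputable def betaK (d : ℤ) (n : ℕ) : (↥(Kf d (n+1)) → ℚ) →ₗ[ℚ] (↥(Kf d n) → ℚ) :=
  resMap n (Kf d (n+1)) (Kf d n)

/-- `π̃^* : ℚSP_{d,n} → ℚSP_{d+1,n+1}`, `Π ↦ Π ∪ {{n+1}}`. -/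
noncomputable def piUp (d : ℤ) (n : ℕ) :
    (↥(SPf d n) → ℚ) →ₗ[ℚ] (↥(SPf (d+1) (n+1)) → ℚ) :=
  Matrix.mulVecLin (Matrix.of fun B' B =>
    if B'.val = insert {n+1} B.val then (1 : ℚ) else 0)

/-- `π̃_* : ℚSP_{d,n+1} → ℚSP_{d,n}`: a partition `Π` of `[n+1]` goes to `0` if
`{n+1}` is a part of `Π`, and otherwise to `{P \ {n+1} : P ∈ Π}`. -/
noncomputable def piDown (d : ℤ) (n : ℕ) :
    (↥(SPf d (n+1)) → ℚ) →ₗ[ℚ] (↥(SPf d n) → ℚ) :=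
  Matrix.mulVecLin (Matrix.of fun B' B =>
    if ({n+1} : Finset ℕ) ∉ B.val ∧
        B'.val = B.val.image (fun P => P.erase (n+1)) then (1 : ℚ) else 0)

/-- The subspace `R_{d,n} ⊆ ℚSP_{d,n}` spanned by the Keel/Kontsevich–Manin type
relations: for every partition `S` of `[n]` with `d+4` parts and distinct parts
`P₁,P₂,P₃,P₄ ∈ S`, the element
`{P₁∪P₂,…} + {P₃∪P₄,…} − {P₁∪P₃,…} − {P₂∪P₄,…}`. -/
noncomputable def Rsub (d : ℤ) (n : ℕ) : Submodule ℚ (↥(SPf d n) → ℚ) :=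
  Submodule.span ℚ { v | ∃ S : Finset (Finset ℕ), ∃ P1 P2 P3 P4 : Finset ℕ,
    IsPartition n S ∧ (S.card : ℤ) = d + 4 ∧
    P1 ∈ S ∧ P2 ∈ S ∧ P3 ∈ S ∧ P4 ∈ S ∧
    P1 ≠ P2 ∧ P1 ≠ P3 ∧ P1 ≠ P4 ∧ P2 ≠ P3 ∧ P2 ≠ P4 ∧ P3 ≠ P4 ∧
    v = bvec (SPf d n) (insert (P1 ∪ P2) ((S.erase P1).erase P2))
      + bvec (SPf d n) (insert (P3 ∪ P4) ((S.erase P3).erase P4))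
      - bvec (SPf d n) (insert (P1 ∪ P3) ((S.erase P1).erase P3))
      - bvec (SPf d n) (insert (P2 ∪ P4) ((S.erase P2).erase P4)) }

/-- `F_n = {(P₁,P₂) : P₁ ∪ P₂ = [n], P₁ ∩ P₂ = ∅, 1 ∈ P₁}`. -/
def Fset (n : ℕ) : Finset (Finset ℕ × Finset ℕ) :=
  ((Finset.Icc 1 n).powerset ×ˢ (Finset.Icc 1 n).powerset).filter
    (fun p => p.1 ∪ p.2 = Finset.Icc 1 n ∧ p.1 ∩ p.2 = ∅ ∧ 1 ∈ p.1)

/-- `E_n`: subsets of `[n]` of even cardinality. -/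
def Eset (n : ℕ) : Finset (Finset ℕ) :=
  (Finset.Icc 1 n).powerset.filter (fun T => T.card % 2 = 0)

/-- `O_n`: subsets of `[n]` of odd cardinality. -/
def Oset (n : ℕ) : Finset (Finset ℕ) :=
  (Finset.Icc 1 n).powerset.filter (fun T => T.card % 2 = 1)

/-- `odd_n : ℚF_n → ℚO_n`, `(P₁,P₂) ↦ −Σ_{T⊆P₁, |T| odd} T + Σ_{T⊆P₂, |T| odd} T`. -/
noncomputable def oddMap (n : ℕ) : (↥(Fset n) → ℚ) →ₗ[ℚ] (↥(Oset n) → ℚ) :=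
  Matrix.mulVecLin (Matrix.of fun T p =>
    (if T.val ⊆ p.val.1 then (-1 : ℚ) else 0) + (if T.val ⊆ p.val.2 then (1 : ℚ) else 0))

/-- `even_n : ℚF_n → ℚE_n`, `(P₁,P₂) ↦ −Σ_{T⊆P₁, |T| even} T − Σ_{T⊆P₂, |T| even} T`. -/
noncomputable def evenMap (n : ℕ) : (↥(Fset n) → ℚ) →ₗ[ℚ] (↥(Eset n) → ℚ) :=
  Matrix.mulVecLin (Matrix.of fun T p =>
    (if T.val ⊆ p.val.1 then (-1 : ℚ) else 0) + (if T.val ⊆ p.val.2 then (-1 : ℚ) else 0))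

/-- `γ : ℚF_n → ℚF_{n+1}`, `(P₁,P₂) ↦ (P₁∪{n+1},P₂) − (P₁,P₂∪{n+1})`. -/
noncomputable def gammaMap (n : ℕ) : (↥(Fset n) → ℚ) →ₗ[ℚ] (↥(Fset (n+1)) → ℚ) :=
  Matrix.mulVecLin (Matrix.of fun q p =>
    (if q.val = (insert (n+1) p.val.1, p.val.2) then (1 : ℚ) else 0)
    - (if q.val = (p.val.1, insert (n+1) p.val.2) then (1 : ℚ) else 0))

/-- `π̃'_* : ℚF_{n+1} → ℚF_n`, `(P₁,P₂) ↦ (P₁∖{n+1}, P₂∖{n+1})`. -/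
noncomputable def piDownF (n : ℕ) : (↥(Fset (n+1)) → ℚ) →ₗ[ℚ] (↥(Fset n) → ℚ) :=
  Matrix.mulVecLin (Matrix.of fun q p =>
    if q.val = (p.val.1.erase (n+1), p.val.2.erase (n+1)) then (1 : ℚ) else 0)

section Statement10Aux
open Finset

lemma neg_one_pow_congr' {m l : ℕ} (h : m % 2 = l % 2) : (-1:ℚ)^m = (-1:ℚ)^l := by
  conv_lhs => rw [← Nat.div_add_mod m 2, pow_add, pow_mul, neg_one_sq, one_pow, one_mul, h]
  conv_rhs => rw [← Nat.div_add_mod l 2, pow_add, pow_mul, neg_one_sq, one_pow, one_mul]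

lemma powsum (D : Finset ℕ) :
    ∑ B ∈ D.powerset, (-1:ℚ)^B.card = if D = ∅ then 1 else 0 := by
  have h := Finset.sum_powerset_neg_one_pow_card (x := D)
  have h2 : ((∑ m ∈ D.powerset, (-1:ℤ)^m.card : ℤ) : ℚ)
      = ∑ m ∈ D.powerset, (-1:ℚ)^m.card := by push_cast; rfl
  rw [← h2, h]; split <;> norm_num

lemma mobiusB (t C : Finset ℕ) :
    ∑ B ∈ C.powerset, ((-1:ℚ)^B.card * if Disjoint t B then 1 else 0)
      = if C ⊆ t then 1 else 0 := by
  have hsub : (C \ t).powerset ⊆ C.powerset :=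
    Finset.powerset_mono.2 Finset.sdiff_subset
  have h2 := Finset.sum_subset hsub (f := fun B => ((-1:ℚ)^B.card * if Disjoint t B then 1 else 0))
    (by
      intro B hB hnB
      rw [if_neg, mul_zero]
      intro hd
      exact hnB (Finset.mem_powerset.2 (Finset.subset_sdiff.2 ⟨Finset.mem_powerset.1 hB, hd.symm⟩)))
  rw [← h2, Finset.sum_congr rfl (fun B hB => ?_), powsum]
  · congr 1
    simp [sdiff_eq_empty_iff_subset]
  · rw [if_pos, mul_one]
    have h3 := Finset.mem_powerset.1 hB
    rw [Finset.subset_sdiff] at h3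
    exact h3.2.symm

lemma mobiusA (A C : Finset ℕ) :
    ∑ B ∈ C.powerset, ((-1:ℚ)^B.card * if A ⊆ B then 1 else 0)
      = if A = C then (-1:ℚ)^C.card else 0 := by
  by_cases hAC : A ⊆ C
  · have key : ∑ B ∈ C.powerset, ((-1:ℚ)^B.card * if A ⊆ B then 1 else 0)
        = ∑ B ∈ C.powerset, ((-1:ℚ)^C.card * ((-1:ℚ)^B.card * if Disjoint A B then 1 else 0)) := by
      refine Finset.sum_nbij' (fun B => C \ B) (fun B => C \ B) ?_ ?_ ?_ ?_ ?_
      · intro B _; exact Finset.mem_powerset.2 Finset.sdiff_subset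
      · intro B _; exact Finset.mem_powerset.2 Finset.sdiff_subset
      · intro B hB; exact Finset.sdiff_sdiff_eq_self (Finset.mem_powerset.1 hB)
      · intro B hB; exact Finset.sdiff_sdiff_eq_self (Finset.mem_powerset.1 hB)
      · intro B hB
        have hBC := Finset.mem_powerset.1 hB
        have hcard : (C \ B).card + B.card = C.card := Finset.card_sdiff_add_card_eq_card hBC
        have h1 : (-1:ℚ)^C.card = (-1:ℚ)^((C\B).card) * (-1:ℚ)^B.card := by
          rw [← pow_add, hcard]
        have h2 : (-1:ℚ)^((C\B).card) * (-1:ℚ)^((C\B).card) = 1 := by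
          rw [← pow_add, ← two_mul, pow_mul]; norm_num
        have hiff : A ⊆ B ↔ Disjoint A (C \ B) := (disjoint_sdiff_iff_le hAC hBC).symm
        simp only [← hiff]
        rw [h1]
        split
        · linear_combination (-(-1:ℚ)^B.card) * h2
        · ring
    rw [key, ← Finset.mul_sum, mobiusB A C]
    by_cases h : A = C
    · subst h; rw [if_pos rfl, if_pos (Finset.Subset.refl A), mul_one]
    · rw [if_neg h, if_neg (fun hCA => h (Finset.Subset.antisymm hAC hCA)), mul_zero]
  · rw [if_neg (fun heq => hAC (by rw [heq]))]
    refine Finset.sum_eq_zero (fun B hB => ?_)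
    rw [if_neg (fun hAB => hAC (hAB.trans (Finset.mem_powerset.1 hB))), mul_zero]

def Sgen (n r : ℕ) : Finset (Finset ℕ) :=
  (Finset.Icc 1 n).powerset.filter (fun T => T.card % 2 = r)

lemma mem_Sgen {n r : ℕ} {T : Finset ℕ} :
    T ∈ Sgen n r ↔ T ⊆ Finset.Icc 1 n ∧ T.card % 2 = r := by
  simp [Sgen]

lemma pair_mem {n : ℕ} (hn : 1 ≤ n) {B : Finset ℕ} (hB : B ⊆ Finset.Icc 1 n) :
    (insert 1 B, Finset.Icc 1 n \ insert 1 B) ∈ Fset n := by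
  have h1 : (1:ℕ) ∈ Finset.Icc 1 n := by simp [hn]
  have hins : insert 1 B ⊆ Finset.Icc 1 n := Finset.insert_subset h1 hB
  simp only [Fset, Finset.mem_filter, Finset.mem_product, Finset.mem_powerset]
  exact ⟨⟨hins, Finset.sdiff_subset⟩, Finset.union_sdiff_of_subset hins,
    Finset.inter_sdiff_self _ _, Finset.mem_insert_self 1 B⟩

section Main

variable {n r : ℕ} {M : Matrix ↥(Sgen n r) ↥(Fset n) ℚ}

/-- the image of the Möbius-transformed family of generators -/
lemma gen_mem (hn : 1 ≤ n)
    (hM : ∀ (t : ↥(Sgen n r)) (p : ↥(Fset n)), M t p =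
      (if t.val ⊆ p.val.1 then (-1:ℚ) else 0) + (-(-1:ℚ)^r) * (if t.val ⊆ p.val.2 then 1 else 0))
    {C : Finset ℕ} (hC : C ⊆ Finset.Icc 1 n) (h1C : 1 ∉ C) :
    (fun t : ↥(Sgen n r) => (-(-1:ℚ)^C.card) * (if t.val.erase 1 = C then 1 else 0)
      + (-(-1:ℚ)^r) * (if 1 ∉ t.val ∧ C ⊆ t.val then 1 else 0))
      ∈ LinearMap.range M.mulVecLin := by
  classical
  refine ⟨∑ B ∈ C.powerset.attach, ((-1:ℚ)^B.val.card) •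
    (Pi.single (⟨(insert 1 B.val, Finset.Icc 1 n \ insert 1 B.val),
      pair_mem hn ((Finset.mem_powerset.1 B.2).trans hC)⟩ : ↥(Fset n)) 1 : ↥(Fset n) → ℚ), ?_⟩
  funext t
  have htIcc : t.val ⊆ Finset.Icc 1 n := (mem_Sgen.1 t.2).1
  have step : M.mulVecLin (∑ B ∈ C.powerset.attach, ((-1:ℚ)^B.val.card) •
      (Pi.single (⟨(insert 1 B.val, Finset.Icc 1 n \ insert 1 B.val),
        pair_mem hn ((Finset.mem_powerset.1 B.2).trans hC)⟩ : ↥(Fset n)) 1 : ↥(Fset n) → ℚ)) t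
      = ∑ B ∈ C.powerset,
        (-((-1:ℚ)^B.card * if t.val.erase 1 ⊆ B then 1 else 0)
         + (-(-1:ℚ)^r) * ((if 1 ∈ t.val then 0 else 1)
            * ((-1:ℚ)^B.card * if Disjoint t.val B then 1 else 0))) := by
    rw [map_sum, Finset.sum_apply,
      ← Finset.sum_attach C.powerset (fun B =>
        (-((-1:ℚ)^B.card * if t.val.erase 1 ⊆ B then 1 else 0)
         + (-(-1:ℚ)^r) * ((if 1 ∈ t.val then 0 else 1)
            * ((-1:ℚ)^B.card * if Disjoint t.val B then 1 else 0))))]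
    refine Finset.sum_congr rfl (fun B _ => ?_)
    rw [map_smul, Pi.smul_apply, Matrix.mulVecLin_apply, Matrix.mulVec_single_one]
    simp only [mul_one, smul_eq_mul, Matrix.col_apply]
    rw [hM]
    dsimp only
    have c1 : (t.val ⊆ insert 1 B.val) = (t.val.erase 1 ⊆ B.val) :=
      propext Finset.subset_insert_iff
    have c2 : (t.val ⊆ Finset.Icc 1 n \ insert 1 B.val) = (1 ∉ t.val ∧ Disjoint t.val B.val) :=
      propext (by rw [Finset.subset_sdiff, Finset.disjoint_insert_right, and_iff_right htIcc])
    simp only [c1, c2]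
    by_cases h1 : 1 ∈ t.val <;> by_cases hA : (t.val.erase 1 ⊆ B.val)
      <;> by_cases hD : Disjoint t.val B.val <;> simp [h1, hA, hD] <;> (try split_ifs) <;> ring
  rw [step, Finset.sum_add_distrib]
  have e1 : ∑ B ∈ C.powerset, -((-1:ℚ)^B.card * if t.val.erase 1 ⊆ B then 1 else 0)
      = (-(-1:ℚ)^C.card) * (if t.val.erase 1 = C then 1 else 0) := by
    rw [Finset.sum_neg_distrib, mobiusA]
    split_ifs <;> ring
  have e2 : ∑ B ∈ C.powerset, (-(-1:ℚ)^r) * ((if 1 ∈ t.val then 0 else 1)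
        * ((-1:ℚ)^B.card * if Disjoint t.val B then 1 else 0))
      = (-(-1:ℚ)^r) * (if 1 ∉ t.val ∧ C ⊆ t.val then 1 else 0) := by
    rw [← Finset.mul_sum, ← Finset.mul_sum, mobiusB]
    congr 1
    by_cases h1 : 1 ∈ t.val <;> by_cases h2 : C ⊆ t.val <;> simp [h1, h2]
  rw [e1, e2]

/-- indicator functions of families of basis vectors already in the range -/
lemma indicator_mem (P : ↥(Sgen n r) → Prop) [DecidablePred P]
    (hP : ∀ s, P s → Pi.single s (1:ℚ) ∈ LinearMap.range M.mulVecLin) :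
    (fun s => if P s then (1:ℚ) else 0) ∈ LinearMap.range M.mulVecLin := by
  classical
  have : (fun s => if P s then (1:ℚ) else 0)
      = ∑ t' : ↥(Sgen n r), (if P t' then (1:ℚ) else 0) • (Pi.single t' (1:ℚ) : ↥(Sgen n r) → ℚ) := by
    funext s
    rw [Finset.sum_apply]
    have h3 : ∀ t' : ↥(Sgen n r), ((if P t' then (1:ℚ) else 0) • (Pi.single t' (1:ℚ) : ↥(Sgen n r) → ℚ)) s
        = (Pi.single t' (if P t' then (1:ℚ) else 0) : ↥(Sgen n r) → ℚ) s := by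
      intro t'
      simp only [Pi.smul_apply, smul_eq_mul, Pi.single_apply]
      split_ifs <;> ring
    simp only [h3]
    exact (Fintype.sum_pi_single s (fun t' => if P t' then (1:ℚ) else 0)).symm
  rw [this]
  refine Submodule.sum_mem _ (fun t' _ => ?_)
  by_cases h : P t'
  · exact Submodule.smul_mem _ _ (hP t' h)
  · rw [if_neg h, zero_smul]
    exact Submodule.zero_mem _

end Main

section Main2
variable {n r : ℕ} {M : Matrix ↥(Sgen n r) ↥(Fset n) ℚ}

lemma single_mem1 (hn : 1 ≤ n)
    (hM : ∀ (t : ↥(Sgen n r)) (p : ↥(Fset n)), M t p =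
      (if t.val ⊆ p.val.1 then (-1:ℚ) else 0) + (-(-1:ℚ)^r) * (if t.val ⊆ p.val.2 then 1 else 0)) :
    ∀ (k : ℕ) (T : Finset ℕ) (hT : T ∈ Sgen n r), 1 ∉ T → (Finset.Icc 1 n \ T).card < k →
      (Pi.single (⟨T, hT⟩ : ↥(Sgen n r)) 1 : ↥(Sgen n r) → ℚ) ∈ LinearMap.range M.mulVecLin := by
  intro k
  induction k with
  | zero => exact fun T hT h1T hk => absurd hk (Nat.not_lt_zero _)
  | succ k ih =>
    intro T hT h1T hk
    obtain ⟨hTIcc, hTr⟩ := mem_Sgen.1 hT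
    have hu := gen_mem hn hM hTIcc h1T
    have hw : (fun s : ↥(Sgen n r) => if (1 ∉ s.val ∧ T ⊆ s.val ∧ s.val ≠ T) then (1:ℚ) else 0)
        ∈ LinearMap.range M.mulVecLin := by
      refine indicator_mem _ (fun s hs => ?_)
      have hsIcc := (mem_Sgen.1 s.2).1
      have hcard : (Finset.Icc 1 n \ s.val).card < k := by
        have h3 : T.card < s.val.card :=
          Finset.card_lt_card (ssubset_of_subset_of_ne hs.2.1 (Ne.symm hs.2.2))
        have h4 : s.val.card ≤ (Finset.Icc 1 n).card := Finset.card_le_card hsIcc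
        rw [Finset.card_sdiff_of_subset hsIcc]
        rw [Finset.card_sdiff_of_subset hTIcc] at hk
        omega
      have := ih s.val s.2 hs.1 hcard
      simpa using this
    have h2r : ((-1:ℚ)^(r*2)) = 1 := by
      rw [pow_mul']; norm_num
    have hεC : (-(-1:ℚ)^T.card) = (-(-1:ℚ)^r) := by
      rw [neg_one_pow_congr' (show T.card % 2 = r % 2 by omega)]
    have key : (Pi.single (⟨T, hT⟩ : ↥(Sgen n r)) 1 : ↥(Sgen n r) → ℚ)
        = (2⁻¹ * (-(-1:ℚ)^r)) • (fun t : ↥(Sgen n r) =>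
              (-(-1:ℚ)^T.card) * (if t.val.erase 1 = T then 1 else 0)
              + (-(-1:ℚ)^r) * (if 1 ∉ t.val ∧ T ⊆ t.val then 1 else 0))
          - (2⁻¹ : ℚ) • (fun s : ↥(Sgen n r) =>
              if (1 ∉ s.val ∧ T ⊆ s.val ∧ s.val ≠ T) then (1:ℚ) else 0) := by
      funext s
      obtain ⟨hsIcc, hsr⟩ := mem_Sgen.1 s.2
      have hcard1 : 1 ≤ s.val.card ∨ True := Or.inr trivial
      have hcond : (s.val.erase 1 = T) ↔ (s.val = T) := by
        constructor
        · intro h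
          by_cases h1s : 1 ∈ s.val
          · exfalso
            have h5 : (s.val.erase 1).card = s.val.card - 1 := Finset.card_erase_of_mem h1s
            have h6 : 1 ≤ s.val.card := Finset.card_pos.2 ⟨1, h1s⟩
            rw [h] at h5
            omega
          · rwa [Finset.erase_eq_of_notMem h1s] at h
        · intro h
          rw [h]
          exact Finset.erase_eq_of_notMem h1T
      simp only [Pi.sub_apply, Pi.smul_apply, smul_eq_mul, Pi.single_apply, hεC]
      by_cases hsT : s.val = T
      · rw [if_pos (Subtype.ext hsT), if_pos (hcond.2 hsT),
          if_pos ⟨hsT ▸ h1T, hsT ▸ Finset.Subset.refl T⟩, if_neg (by simp [hsT])]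
        linear_combination -h2r
      · rw [if_neg (fun h => hsT (congrArg Subtype.val h)), if_neg (fun h => hsT (hcond.1 h))]
        by_cases hc : 1 ∉ s.val ∧ T ⊆ s.val
        · rw [if_pos hc, if_pos ⟨hc.1, hc.2, hsT⟩]
          linear_combination (-(2⁻¹:ℚ)) * h2r
        · rw [if_neg hc, if_neg (fun h => hc ⟨h.1, h.2.1⟩)]
          ring
    rw [key]
    exact Submodule.sub_mem _ (Submodule.smul_mem _ _ hu) (Submodule.smul_mem _ _ hw)

lemma single_mem_all (hn : 1 ≤ n)
    (hM : ∀ (t : ↥(Sgen n r)) (p : ↥(Fset n)), M t p =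
      (if t.val ⊆ p.val.1 then (-1:ℚ) else 0) + (-(-1:ℚ)^r) * (if t.val ⊆ p.val.2 then 1 else 0))
    (t : ↥(Sgen n r)) :
    (Pi.single t 1 : ↥(Sgen n r) → ℚ) ∈ LinearMap.range M.mulVecLin := by
  obtain ⟨htIcc, htr⟩ := mem_Sgen.1 t.2
  by_cases h1 : 1 ∈ t.val
  · have hC : t.val.erase 1 ⊆ Finset.Icc 1 n := (Finset.erase_subset _ _).trans htIcc
    have h1C : (1:ℕ) ∉ t.val.erase 1 := Finset.notMem_erase _ _
    have hu := gen_mem hn hM hC h1C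
    have hw : (fun s : ↥(Sgen n r) => if (1 ∉ s.val ∧ t.val.erase 1 ⊆ s.val) then (1:ℚ) else 0)
        ∈ LinearMap.range M.mulVecLin := by
      refine indicator_mem _ (fun s hs => ?_)
      have := single_mem1 hn hM ((Finset.Icc 1 n \ s.val).card + 1) s.val s.2 hs.1
        (Nat.lt_succ_self _)
      simpa using this
    have h2r : ((-1:ℚ)^(r*2)) = 1 := by
      rw [pow_mul']; norm_num
    have htc : 1 ≤ t.val.card := Finset.card_pos.2 ⟨1, h1⟩
    have hec : (t.val.erase 1).card = t.val.card - 1 := Finset.card_erase_of_mem h1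
    have hεC : (-(-1:ℚ)^(t.val.erase 1).card) = (-1:ℚ)^r := by
      rw [neg_one_pow_congr' (show (t.val.erase 1).card % 2 = (r+1) % 2 by omega),
        pow_succ]
      ring
    have key : (Pi.single t 1 : ↥(Sgen n r) → ℚ)
        = ((-1:ℚ)^r) • (fun s : ↥(Sgen n r) =>
              (-(-1:ℚ)^(t.val.erase 1).card) * (if s.val.erase 1 = t.val.erase 1 then 1 else 0)
              + (-(-1:ℚ)^r) * (if 1 ∉ s.val ∧ t.val.erase 1 ⊆ s.val then 1 else 0))
          + (fun s : ↥(Sgen n r) =>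
              if (1 ∉ s.val ∧ t.val.erase 1 ⊆ s.val) then (1:ℚ) else 0) := by
      funext s
      obtain ⟨hsIcc, hsr⟩ := mem_Sgen.1 s.2
      have hcond : (s.val.erase 1 = t.val.erase 1) ↔ (s.val = t.val) := by
        constructor
        · intro h
          by_cases h1s : 1 ∈ s.val
          · rw [← Finset.insert_erase h1s, h, Finset.insert_erase h1]
          · exfalso
            rw [Finset.erase_eq_of_notMem h1s] at h
            have h5 : s.val.card = t.val.card - 1 := by rw [h, hec]
            omega
        · intro h; rw [h]
      simp only [Pi.add_apply, Pi.smul_apply, smul_eq_mul, Pi.single_apply, hεC]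
      by_cases hst : s.val = t.val
      · rw [if_pos (Subtype.ext hst), if_pos (hcond.2 hst),
          if_neg (show ¬(1 ∉ s.val ∧ t.val.erase 1 ⊆ s.val) from fun h => h.1 (hst ▸ h1))]
        linear_combination -h2r
      · rw [if_neg (fun h => hst (congrArg Subtype.val h)), if_neg (fun h => hst (hcond.1 h))]
        by_cases hc : 1 ∉ s.val ∧ t.val.erase 1 ⊆ s.val
        · rw [if_pos hc]
          linear_combination h2r
        · rw [if_neg hc]
          ring
    rw [key]
    exact Submodule.add_mem _ (Submodule.smul_mem _ _ hu) hw
  · have := single_mem1 hn hM ((Finset.Icc 1 n \ t.val).card + 1) t.val t.2 h1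
      (Nat.lt_succ_self _)
    simpa using this

lemma gen_surj (hn : 1 ≤ n)
    (hM : ∀ (t : ↥(Sgen n r)) (p : ↥(Fset n)), M t p =
      (if t.val ⊆ p.val.1 then (-1:ℚ) else 0) + (-(-1:ℚ)^r) * (if t.val ⊆ p.val.2 then 1 else 0)) :
    Function.Surjective M.mulVecLin := by
  rw [← LinearMap.range_eq_top, Submodule.eq_top_iff']
  intro v
  have hv : v = ∑ t : ↥(Sgen n r), (v t) • (Pi.single t (1:ℚ) : ↥(Sgen n r) → ℚ) := by
    funext x
    rw [Finset.sum_apply]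
    have h3 : ∀ t : ↥(Sgen n r), ((v t) • (Pi.single t (1:ℚ) : ↥(Sgen n r) → ℚ)) x
        = (Pi.single t (v t) : ↥(Sgen n r) → ℚ) x := by
      intro t
      simp only [Pi.smul_apply, smul_eq_mul, Pi.single_apply]
      split_ifs <;> ring
    simp only [h3]
    exact (Fintype.sum_pi_single x v).symm
  rw [hv]
  exact Submodule.sum_mem _ (fun t _ => Submodule.smul_mem _ _ (single_mem_all hn hM t))

end Main2

end Statement10Aux

/-- For every `n ≥ 1`, `odd_n : ℚF_n → ℚO_n` and
`even_n : ℚF_n → ℚE_n` are surjective. -/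
theorem statement10 (n : ℕ) (hn : 1 ≤ n) :
    Function.Surjective (oddMap n) ∧ Function.Surjective (evenMap n) := by
  constructor
  · exact gen_surj (r := 1) hn (fun t p => by
      show (if t.val ⊆ p.val.1 then (-1:ℚ) else 0) + (if t.val ⊆ p.val.2 then 1 else 0) = _
      norm_num)
  · exact gen_surj (r := 0) hn (fun t p => by
      show (if t.val ⊆ p.val.1 then (-1:ℚ) else 0) + (if t.val ⊆ p.val.2 then (-1:ℚ) else 0) = _
      split_ifs <;> norm_num)
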